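/- The total progeny R of a Galton–Watson process with Poisson(α) offspring (α < 1), started from one individual, satisfies the Borel distribution: P(R = n) = e^{-αn}·(αn)^{n-1}/n! for n ≥ 1. -/

import Mathlib

open MeasureTheory ProbabilityTheory
open scoped ENNReal
open Finset

/-- Poisson pmf as a real number. -/
noncomputable def poisR (β : ℝ) (t : ℕ) : ℝ := Real.exp (-β) * β ^ t / (Nat.factorial t)

lemma poisR_nonneg {β : ℝ} (hβ : 0 ≤ β) (t : ℕ) : 0 ≤ poisR β t := by
  unfold poisR
  positivity

lemma poisR_conv {β γ : ℝ} (t : ℕ) :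
    ∑ c ∈ range (t + 1), poisR β c * poisR γ (t - c) = poisR (β + γ) t := by
  unfold poisR
  rw [add_pow]
  rw [eq_div_iff (Nat.cast_ne_zero.mpr (Nat.factorial_ne_zero t) : (Nat.factorial t:ℝ) ≠ 0), Finset.mul_sum, Finset.sum_mul]
  refine Finset.sum_congr rfl fun c hc => ?_
  have hc' : c ≤ t := Nat.lt_succ_iff.mp (Finset.mem_range.mp hc)
  have h1 : Real.exp (-(β + γ)) = Real.exp (-β) * Real.exp (-γ) := by
    rw [← Real.exp_add]; ring_nf
  rw [h1]
  have h2 : (Nat.factorial t : ℝ) ≠ 0 := Nat.cast_ne_zero.mpr (Nat.factorial_ne_zero t)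
  have h3 : (Nat.factorial c : ℝ) ≠ 0 := Nat.cast_ne_zero.mpr (Nat.factorial_ne_zero c)
  have h4 : (Nat.factorial (t - c) : ℝ) ≠ 0 := Nat.cast_ne_zero.mpr (Nat.factorial_ne_zero _)
  have hchoose : (t.choose c : ℝ) = (Nat.factorial t : ℝ) / (Nat.factorial c * Nat.factorial (t - c)) := by
    rw [Nat.choose_eq_factorial_div_factorial hc']
    rw [Nat.cast_div]
    · push_cast; ring
    · exact Nat.factorial_mul_factorial_dvd_factorial hc'
    · positivity
  rw [hchoose]
  field_simp

lemma abel_id (x y : ℝ) {s : ℕ} (hs : 1 ≤ s) :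
    ∑ j ∈ range (s + 1), (s.choose j : ℝ) * j * x ^ j * y ^ (s - j)
      = s * x * (x + y) ^ (s - 1) := by
  obtain ⟨s, rfl⟩ : ∃ m, s = m + 1 := ⟨s - 1, (Nat.succ_pred_eq_of_pos hs).symm⟩
  rw [Finset.sum_range_succ']
  simp only [Nat.cast_zero, mul_zero, zero_mul, pow_zero, add_zero, Nat.choose_zero_right]
  have key : ∀ i : ℕ, ((s+1).choose (i+1) : ℝ) * (i+1) = (s+1) * (s.choose i) := by
    intro i
    have := Nat.add_one_mul_choose_eq s i
    have : ((s+1) * s.choose i : ℕ) = ((s+1).choose (i+1) * (i+1) : ℕ) := by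
      simpa [Nat.succ_eq_add_one] using this
    exact_mod_cast congrArg (Nat.cast (R := ℝ)) this.symm
  have : ∑ i ∈ range (s + 1), ((s+1).choose (i+1) : ℝ) * ((i+1 : ℕ) : ℝ) * x ^ (i+1) * y ^ (s + 1 - (i+1))
      = (s+1) * x * ∑ i ∈ range (s + 1), x ^ i * y ^ (s - i) * (s.choose i) := by
    rw [Finset.mul_sum]
    refine Finset.sum_congr rfl fun i hi => ?_
    rw [show (((i+1:ℕ)):ℝ) = ((i:ℝ)+1) by push_cast; ring, key i]
    have : s + 1 - (i + 1) = s - i := by omega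
    rw [this]; ring
  rw [this, ← add_pow]
  simp

/-- The Borel–Tanner value: probability that total progeny of `a` ancestors is `a + s`. -/
noncomputable def borelR (α : ℝ) (a s : ℕ) : ℝ :=
  Real.exp (-(α * (a + s))) * α ^ s * a * ((a + s : ℕ) : ℝ) ^ s / ((a + s) * Nat.factorial s)

lemma borelR_nonneg {α : ℝ} (hα : 0 ≤ α) (a s : ℕ) : 0 ≤ borelR α a s := by
  unfold borelR; positivity

lemma borelR_zero (α : ℝ) {a : ℕ} (ha : 1 ≤ a) : borelR α a 0 = Real.exp (-(α * a)) := by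
  unfold borelR
  have : (a:ℝ) ≠ 0 := by positivity
  field_simp
  simp

lemma borelR_rec {α : ℝ} {a s : ℕ} (ha : 1 ≤ a) (hs : 1 ≤ s) :
    borelR α a s = ∑ j ∈ Finset.Icc 1 s, poisR (α * a) j * borelR α j (s - j) := by
  have hsum : ∀ j ∈ Finset.Icc 1 s,
      poisR (α * a) j * borelR α j (s - j)
        = (Real.exp (-(α * (a + s))) * α ^ s / ((s : ℝ) * Nat.factorial s))
            * ((s.choose j : ℝ) * j * (a:ℝ) ^ j * (s:ℝ) ^ (s - j)) := by
    intro j hj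
    obtain ⟨hj1, hj2⟩ := Finset.mem_Icc.mp hj
    unfold poisR borelR
    have hjs : j + (s - j) = s := by omega
    rw [hjs]
    rw [show ((j:ℝ) + ((s - j : ℕ):ℝ)) = s by rw [Nat.cast_sub hj2]; ring]
    have hfacs : (Nat.factorial s : ℝ) ≠ 0 := Nat.cast_ne_zero.mpr (Nat.factorial_ne_zero s)
    have hfacj : (Nat.factorial j : ℝ) ≠ 0 := Nat.cast_ne_zero.mpr (Nat.factorial_ne_zero j)
    have hfacsj : (Nat.factorial (s - j) : ℝ) ≠ 0 := Nat.cast_ne_zero.mpr (Nat.factorial_ne_zero _)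
    have hs0 : (s:ℝ) ≠ 0 := by positivity
    have hchoose : (s.choose j : ℝ) = (Nat.factorial s : ℝ) / (Nat.factorial j * Nat.factorial (s - j)) := by
      rw [Nat.choose_eq_factorial_div_factorial hj2, Nat.cast_div]
      · push_cast; ring
      · exact Nat.factorial_mul_factorial_dvd_factorial hj2
      · positivity
    have hexp : Real.exp (-(α * a)) * Real.exp (-(α * s)) = Real.exp (-(α * (a + s))) := by
      rw [← Real.exp_add]; ring_nf
    have halpha : α ^ j * α ^ (s - j) = α ^ s := by rw [← pow_add, hjs]
    have hma : (α * a) ^ j = α ^ j * (a:ℝ) ^ j := mul_pow _ _ _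
    rw [hchoose]
    push_cast
    field_simp
    rw [← hexp, hma, ← halpha]
    ring
  rw [Finset.sum_congr rfl hsum, ← Finset.mul_sum]
  have hext : ∑ j ∈ Finset.Icc 1 s, ((s.choose j : ℝ) * j * (a:ℝ) ^ j * (s:ℝ) ^ (s - j))
      = ∑ j ∈ Finset.range (s + 1), ((s.choose j : ℝ) * j * (a:ℝ) ^ j * (s:ℝ) ^ (s - j)) := by
    refine Finset.sum_subset (fun x hx => ?_) (fun x hx hnx => ?_)
    · simp only [Finset.mem_Icc] at hx; simp only [Finset.mem_range]; omega
    · simp only [Finset.mem_range] at hx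
      simp only [Finset.mem_Icc, not_and, not_le] at hnx
      have : x = 0 := by omega
      simp [this]
  rw [hext, abel_id (a:ℝ) (s:ℝ) hs]
  unfold borelR
  have hs0 : (s:ℝ) ≠ 0 := by positivity
  have hfacs : (Nat.factorial s : ℝ) ≠ 0 := Nat.cast_ne_zero.mpr (Nat.factorial_ne_zero s)
  have has0 : ((a:ℝ) + s) ≠ 0 := by positivity
  have hpow : ((a:ℝ) + s) ^ s = ((a:ℝ) + s) ^ (s - 1) * ((a:ℝ) + s) := by
    rw [← pow_succ]
    congr 1
    omega
  push_cast
  rw [hpow]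
  field_simp

/-- Poisson pmf in `ℝ≥0∞`. -/
noncomputable def pE (β : ℝ) (t : ℕ) : ℝ≥0∞ := ENNReal.ofReal (poisR β t)

lemma pE_conv {β γ : ℝ} (hβ : 0 ≤ β) (hγ : 0 ≤ γ) (t : ℕ) :
    ∑ c ∈ Finset.range (t + 1), pE β c * pE γ (t - c) = pE (β + γ) t := by
  unfold pE
  rw [← poisR_conv (β := β) (γ := γ) t,
    ENNReal.ofReal_sum_of_nonneg (fun c _ => mul_nonneg (poisR_nonneg hβ c) (poisR_nonneg hγ _))]
  exact Finset.sum_congr rfl fun c _ => (ENNReal.ofReal_mul (poisR_nonneg hβ c)).symm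

lemma pE_zero (t : ℕ) : pE 0 t = if t = 0 then 1 else 0 := by
  unfold pE poisR
  rcases Nat.eq_zero_or_pos t with h | h
  · simp [h]
  · rw [if_neg (by omega), zero_pow (by omega)]
    simp

/-- Weight of a trajectory: starting size `a`, then successive positive generation sizes
given by `l`, then extinction. -/
noncomputable def Wt (α : ℝ) : ℕ → List ℕ → ℝ≥0∞
  | a, [] => pE (α * a) 0
  | a, j :: t => pE (α * a) j * Wt α j t

/-- Sum of weights of all trajectories from `a` with total subsequent population `s`. -/
noncomputable def Gfun (α : ℝ) (a s : ℕ) : ℝ≥0∞ :=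
  ∑' l : List ℕ, if (∀ x ∈ l, 0 < x) ∧ l.sum = s then Wt α a l else 0

lemma Gfun_closed {α : ℝ} (hα : 0 < α) : ∀ s a : ℕ, 1 ≤ a →
    Gfun α a s = ENNReal.ofReal (borelR α a s) := by
  intro s
  induction s using Nat.strong_induction_on with
  | _ s ih =>
    intro a ha
    rcases Nat.eq_zero_or_pos s with hs | hs
    · subst hs
      rw [Gfun, tsum_eq_single ([] : List ℕ)]
      · simp only [List.not_mem_nil, IsEmpty.forall_iff, implies_true, List.sum_nil, and_self,
          if_true, Wt]
        rw [borelR_zero α ha]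
        unfold pE poisR
        simp
      · intro l hl
        rcases l with _ | ⟨x, xs⟩
        · exact absurd rfl hl
        · rw [if_neg]
          rintro ⟨hpos, hsum⟩
          have := hpos x (List.mem_cons_self)
          have : 0 < (x :: xs).sum := by
            simp only [List.sum_cons]; omega
          omega
    · -- s ≥ 1 : recursion
      have hsplit : Gfun α a s = ∑' p : ℕ × List ℕ,
          (if (∀ x ∈ (p.1 :: p.2), 0 < x) ∧ (p.1 :: p.2).sum = s then Wt α a (p.1 :: p.2) else 0) := by
        rw [Gfun]
        refine (Function.Injective.tsum_eq (g := fun p : ℕ × List ℕ => p.1 :: p.2) ?_ ?_).symm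
        · intro p q h
          simp only [List.cons.injEq] at h
          exact Prod.ext h.1 h.2
        · intro l hl
          simp only [Function.mem_support] at hl
          rcases l with _ | ⟨x, xs⟩
          · exact absurd (if_neg (by rintro ⟨-, h⟩; simp only [List.sum_nil] at h; omega)) hl
          · exact ⟨(x, xs), rfl⟩
      have hinner : ∀ j : ℕ,
          (∑' t : List ℕ, if (∀ x ∈ (j :: t), 0 < x) ∧ (j :: t).sum = s
              then Wt α a (j :: t) else 0)
            = if 1 ≤ j ∧ j ≤ s then pE (α * a) j * Gfun α j (s - j) else 0 := by
        intro j
        rcases Classical.em (1 ≤ j ∧ j ≤ s) with hj | hj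
        · rw [if_pos hj, Gfun, ← ENNReal.tsum_mul_left]
          refine tsum_congr fun t => ?_
          rcases Classical.em ((∀ x ∈ t, 0 < x) ∧ t.sum = s - j) with ht | ht
          · rw [if_pos, if_pos ht, Wt]
            refine ⟨fun x hx => ?_, ?_⟩
            · rcases List.mem_cons.mp hx with rfl | hx
              · omega
              · exact ht.1 x hx
            · simp only [List.sum_cons, ht.2]; omega
          · rw [if_neg, if_neg ht, mul_zero]
            rintro ⟨h1, h2⟩
            simp only [List.sum_cons] at h2
            exact ht ⟨fun x hx => h1 x (List.mem_cons_of_mem _ hx), by omega⟩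
        · rw [if_neg hj]
          convert tsum_zero with t
          rw [if_neg]
          rintro ⟨h1, h2⟩
          have := h1 j (List.mem_cons_self)
          simp only [List.sum_cons] at h2
          omega
      calc Gfun α a s = ∑' j : ℕ, ∑' t : List ℕ,
            (if (∀ x ∈ (j :: t), 0 < x) ∧ (j :: t).sum = s then Wt α a (j :: t) else 0) := by
              rw [hsplit]
              exact ENNReal.tsum_prod (f := fun j t => if (∀ x ∈ (j :: t), 0 < x) ∧ (j :: t).sum = s then Wt α a (j :: t) else 0)
        _ = ∑' j : ℕ, if 1 ≤ j ∧ j ≤ s then pE (α * a) j * Gfun α j (s - j) else 0 :=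
              tsum_congr hinner
        _ = ∑ j ∈ Finset.Icc 1 s, (pE (α * a) j * Gfun α j (s - j)) := by
              rw [tsum_eq_sum (s := Finset.Icc 1 s)
                (fun j hj => if_neg (by simp only [Finset.mem_Icc] at hj; omega))]
              exact Finset.sum_congr rfl fun j hj => if_pos (Finset.mem_Icc.mp hj)
        _ = ∑ j ∈ Finset.Icc 1 s, ENNReal.ofReal (poisR (α * a) j * borelR α j (s - j)) := by
              refine Finset.sum_congr rfl fun j hj => ?_
              obtain ⟨h1, h2⟩ := Finset.mem_Icc.mp hj
              rw [ih (s - j) (by omega) j h1, pE,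
                ← ENNReal.ofReal_mul (poisR_nonneg (by positivity) j)]
        _ = ENNReal.ofReal (borelR α a s) := by
              rw [← ENNReal.ofReal_sum_of_nonneg (fun j _ =>
                mul_nonneg (poisR_nonneg (by positivity) j) (borelR_nonneg hα.le _ _)),
                ← borelR_rec ha hs]

section Measure

variable {Ω : Type*} [MeasurableSpace Ω] {μ : Measure Ω}
  {α : ℝ} {ξ : ℕ → ℕ → Ω → ℕ}

/-- Cylinder events factor. -/
lemma cyl_meas
    (hiid : iIndepFun (fun p : ℕ × ℕ => ξ p.1 p.2) μ)
    (hpois : ∀ n j k, μ {ω | ξ n j ω = k} = ENNReal.ofReal (Real.exp (-α) * α ^ k / (Nat.factorial k)))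
    (S : Finset (ℕ × ℕ)) (v : ℕ × ℕ → ℕ) :
    μ {ω | ∀ p ∈ S, ξ p.1 p.2 ω = v p} = ∏ p ∈ S, pE α (v p) := by
  have h := hiid.measure_inter_preimage_eq_mul S (sets := fun p => {v p})
    (fun p _ => measurableSet_singleton _)
  have hset : {ω | ∀ p ∈ S, ξ p.1 p.2 ω = v p}
      = ⋂ p ∈ S, (fun ω => ξ p.1 p.2 ω) ⁻¹' {v p} := by
    ext ω; simp [Set.mem_iInter, Set.mem_preimage]
  rw [hset, h]
  refine Finset.prod_congr rfl fun p _ => ?_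
  have : (fun ω => ξ p.1 p.2 ω) ⁻¹' {v p} = {ω | ξ p.1 p.2 ω = v p} := by
    ext ω; simp
  rw [this, hpois p.1 p.2 (v p)]
  rfl

lemma event_meas (hξmeas : ∀ n j, Measurable (ξ n j))
    (K : ℕ) (M T : ℕ → ℕ) (m t : ℕ) (KK : ℕ) (S : Finset (ℕ × ℕ)) (v : ℕ × ℕ → ℕ) :
    MeasurableSet {ω : Ω | (∀ k < K, (∑ j ∈ Finset.range (M k), ξ k j ω) = T k)
      ∧ (∑ j ∈ Finset.range m, ξ KK j ω) = t ∧ (∀ p ∈ S, ξ p.1 p.2 ω = v p)} := by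
  have h1 : MeasurableSet {ω : Ω | ∀ k < K, (∑ j ∈ Finset.range (M k), ξ k j ω) = T k} := by
    have : {ω : Ω | ∀ k < K, (∑ j ∈ Finset.range (M k), ξ k j ω) = T k}
        = ⋂ k ∈ Finset.range K, (fun ω => ∑ j ∈ Finset.range (M k), ξ k j ω) ⁻¹' {T k} := by
      ext ω; simp [Set.mem_iInter]
    rw [this]
    exact Finset.measurableSet_biInter _ fun k _ =>
      (Finset.measurable_sum _ fun j _ => hξmeas k j) (measurableSet_singleton _)
  have h2 : MeasurableSet {ω : Ω | (∑ j ∈ Finset.range m, ξ KK j ω) = t} :=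
    (Finset.measurable_sum _ fun j _ => hξmeas KK j) (measurableSet_singleton _)
  have h3 : MeasurableSet {ω : Ω | ∀ p ∈ S, ξ p.1 p.2 ω = v p} := by
    have : {ω : Ω | ∀ p ∈ S, ξ p.1 p.2 ω = v p}
        = ⋂ p ∈ S, (fun ω => ξ p.1 p.2 ω) ⁻¹' {v p} := by
      ext ω; simp [Set.mem_iInter]
    rw [this]
    exact Finset.measurableSet_biInter _ fun p _ => (hξmeas p.1 p.2) (measurableSet_singleton _)
  have : {ω : Ω | (∀ k < K, (∑ j ∈ Finset.range (M k), ξ k j ω) = T k)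
      ∧ (∑ j ∈ Finset.range m, ξ KK j ω) = t ∧ (∀ p ∈ S, ξ p.1 p.2 ω = v p)}
      = _ ∩ (_ ∩ _) := rfl
  exact h1.inter (h2.inter h3)

lemma row_step (hα : 0 < α) (hξmeas : ∀ n j, Measurable (ξ n j))
    (K : ℕ) (M T : ℕ → ℕ)
    (hK : ∀ (S : Finset (ℕ × ℕ)) (v : ℕ × ℕ → ℕ), (∀ p ∈ S, K ≤ p.1) →
      μ {ω | (∀ k < K, (∑ j ∈ Finset.range (M k), ξ k j ω) = T k) ∧ (∀ p ∈ S, ξ p.1 p.2 ω = v p)}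
        = (∏ k ∈ Finset.range K, pE (α * M k) (T k)) * ∏ p ∈ S, pE α (v p)) :
    ∀ (m : ℕ), ∀ (t : ℕ) (S : Finset (ℕ × ℕ)) (v : ℕ × ℕ → ℕ),
      (∀ p ∈ S, K < p.1 ∨ (p.1 = K ∧ m ≤ p.2)) →
      μ {ω | (∀ k < K, (∑ j ∈ Finset.range (M k), ξ k j ω) = T k)
          ∧ (∑ j ∈ Finset.range m, ξ K j ω) = t ∧ (∀ p ∈ S, ξ p.1 p.2 ω = v p)}
        = (∏ k ∈ Finset.range K, pE (α * M k) (T k)) * pE (α * m) t * ∏ p ∈ S, pE α (v p) := by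
  intro m
  induction m with
  | zero =>
    intro t S v hS
    simp only [Finset.range_zero, Finset.sum_empty, Nat.cast_zero, mul_zero, pE_zero]
    rcases Nat.eq_zero_or_pos t with rfl | ht
    · rw [if_pos rfl, mul_one]
      have : {ω : Ω | (∀ k < K, (∑ j ∈ Finset.range (M k), ξ k j ω) = T k)
          ∧ (0 : ℕ) = 0 ∧ (∀ p ∈ S, ξ p.1 p.2 ω = v p)}
          = {ω | (∀ k < K, (∑ j ∈ Finset.range (M k), ξ k j ω) = T k)
          ∧ (∀ p ∈ S, ξ p.1 p.2 ω = v p)} := by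
        ext ω; simp
      rw [this]
      exact hK S v (fun p hp => by rcases hS p hp with h | ⟨h, _⟩ <;> omega)
    · rw [if_neg (by omega), mul_zero, zero_mul]
      have : {ω : Ω | (∀ k < K, (∑ j ∈ Finset.range (M k), ξ k j ω) = T k)
          ∧ (0 : ℕ) = t ∧ (∀ p ∈ S, ξ p.1 p.2 ω = v p)} = ∅ := by
        ext ω; simp; omega
      rw [this, measure_empty]
  | succ m ihm =>
    intro t S v hS
    have hnotmem : (K, m) ∉ S := by
      intro hmem
      rcases hS _ hmem with h | ⟨_, h⟩ <;> simp at h <;> omega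
    have hdecomp : {ω : Ω | (∀ k < K, (∑ j ∈ Finset.range (M k), ξ k j ω) = T k)
          ∧ (∑ j ∈ Finset.range (m+1), ξ K j ω) = t ∧ (∀ p ∈ S, ξ p.1 p.2 ω = v p)}
        = ⋃ c ∈ Finset.range (t+1), {ω : Ω | (∀ k < K, (∑ j ∈ Finset.range (M k), ξ k j ω) = T k)
          ∧ (∑ j ∈ Finset.range m, ξ K j ω) = t - c
          ∧ (∀ p ∈ insert (K, m) S, ξ p.1 p.2 ω = Function.update v (K, m) c p)} := by
      ext ω
      simp only [Set.mem_setOf_eq, Set.mem_iUnion, Finset.mem_range, Finset.mem_insert]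
      constructor
      · rintro ⟨hA, hB, hC⟩
        rw [Finset.sum_range_succ] at hB
        refine ⟨ξ K m ω, by omega, hA, by omega, ?_⟩
        intro p hp
        rcases hp with rfl | hp
        · simp [Function.update_self]
        · rw [Function.update_of_ne (by rintro rfl; exact hnotmem hp)]
          exact hC p hp
      · rintro ⟨c, hc, hA, hB, hC⟩
        have hm : ξ K m ω = c := by
          have := hC (K, m) (Or.inl rfl)
          simpa [Function.update_self] using this
        refine ⟨hA, ?_, ?_⟩
        · rw [Finset.sum_range_succ, hB, hm]; omega
        · intro p hp
          have := hC p (Or.inr hp)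
          rwa [Function.update_of_ne (by rintro rfl; exact hnotmem hp)] at this
    rw [hdecomp, measure_biUnion_finset ?hd (fun c _ => event_meas hξmeas K M T m (t - c) K _ _)]
    case hd =>
      intro c hc c' hc' hne
      simp only [Finset.coe_range, Set.mem_Iio] at hc hc'
      refine Set.disjoint_left.mpr ?_
      rintro ω ⟨-, -, h1⟩ ⟨-, -, h2⟩
      have e1 := h1 (K, m) (Finset.mem_insert_self _ _)
      have e2 := h2 (K, m) (Finset.mem_insert_self _ _)
      simp only [Function.update_self] at e1 e2
      exact hne (e1 ▸ e2 ▸ rfl)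
    have hterm : ∀ c ∈ Finset.range (t+1),
        μ {ω : Ω | (∀ k < K, (∑ j ∈ Finset.range (M k), ξ k j ω) = T k)
          ∧ (∑ j ∈ Finset.range m, ξ K j ω) = t - c
          ∧ (∀ p ∈ insert (K, m) S, ξ p.1 p.2 ω = Function.update v (K, m) c p)}
        = (∏ k ∈ Finset.range K, pE (α * M k) (T k)) * (pE (α * m) (t - c) * pE α c)
            * ∏ p ∈ S, pE α (v p) := by
      intro c hc
      rw [ihm (t - c) (insert (K, m) S) (Function.update v (K, m) c) ?hcon]
      case hcon =>
        intro p hp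
        rcases Finset.mem_insert.mp hp with rfl | hp
        · exact Or.inr ⟨rfl, le_refl m⟩
        · rcases hS p hp with h | ⟨h, h2⟩
          · exact Or.inl h
          · exact Or.inr ⟨h, by omega⟩
      rw [Finset.prod_insert hnotmem, Function.update_self]
      have : ∏ p ∈ S, pE α (Function.update v (K, m) c p) = ∏ p ∈ S, pE α (v p) :=
        Finset.prod_congr rfl fun p hp => by
          rw [Function.update_of_ne (by rintro rfl; exact hnotmem hp)]
      rw [this]
      ring
    rw [Finset.sum_congr rfl hterm, ← Finset.sum_mul, ← Finset.mul_sum]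
    have hconv : ∑ c ∈ Finset.range (t+1), pE (α * m) (t - c) * pE α c
        = pE (α * (m+1 : ℕ)) t := by
      have := pE_conv (β := α) (γ := α * m) hα.le (by positivity) t
      calc ∑ c ∈ Finset.range (t+1), pE (α * m) (t - c) * pE α c
          = ∑ c ∈ Finset.range (t+1), pE α c * pE (α * m) (t - c) := by
            exact Finset.sum_congr rfl fun c _ => mul_comm _ _
        _ = pE (α + α * m) t := this
        _ = pE (α * (m+1 : ℕ)) t := by push_cast; ring_nf
    rw [hconv]

lemma gen_meas (hα : 0 < α)
    (hiid : iIndepFun (fun p : ℕ × ℕ => ξ p.1 p.2) μ)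
    (hξmeas : ∀ n j, Measurable (ξ n j))
    (hpois : ∀ n j k, μ {ω | ξ n j ω = k} = ENNReal.ofReal (Real.exp (-α) * α ^ k / (Nat.factorial k)))
    (M T : ℕ → ℕ) :
    ∀ (K : ℕ) (S : Finset (ℕ × ℕ)) (v : ℕ × ℕ → ℕ), (∀ p ∈ S, K ≤ p.1) →
      μ {ω | (∀ k < K, (∑ j ∈ Finset.range (M k), ξ k j ω) = T k) ∧ (∀ p ∈ S, ξ p.1 p.2 ω = v p)}
        = (∏ k ∈ Finset.range K, pE (α * M k) (T k)) * ∏ p ∈ S, pE α (v p) := by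
  intro K
  induction K with
  | zero =>
    intro S v hS
    simp only [Nat.not_lt_zero, false_implies, implies_true, true_and, Finset.range_zero,
      Finset.prod_empty, one_mul]
    exact cyl_meas hiid hpois S v
  | succ K ihK =>
    intro S v hS
    have hset : {ω : Ω | (∀ k < K + 1, (∑ j ∈ Finset.range (M k), ξ k j ω) = T k)
        ∧ (∀ p ∈ S, ξ p.1 p.2 ω = v p)}
        = {ω | (∀ k < K, (∑ j ∈ Finset.range (M k), ξ k j ω) = T k)
            ∧ (∑ j ∈ Finset.range (M K), ξ K j ω) = T K ∧ (∀ p ∈ S, ξ p.1 p.2 ω = v p)} := by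
      ext ω
      simp only [Set.mem_setOf_eq]
      constructor
      · rintro ⟨hA, hC⟩
        exact ⟨fun k hk => hA k (by omega), hA K (by omega), hC⟩
      · rintro ⟨hA, hB, hC⟩
        refine ⟨fun k hk => ?_, hC⟩
        rcases Nat.lt_succ_iff_lt_or_eq.mp hk with h | rfl
        · exact hA k h
        · exact hB
    rw [hset, row_step hα hξmeas K M T ihK (M K) (T K) S v
      (fun p hp => Or.inl (by have := hS p hp; omega)), Finset.prod_range_succ]

/-- The probability that the first `K` generation-sums take prescribed values. -/
lemma pois_sum_meas (hα : 0 < α)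
    (hiid : iIndepFun (fun p : ℕ × ℕ => ξ p.1 p.2) μ)
    (hξmeas : ∀ n j, Measurable (ξ n j))
    (hpois : ∀ n j k, μ {ω | ξ n j ω = k} = ENNReal.ofReal (Real.exp (-α) * α ^ k / (Nat.factorial k)))
    (M T : ℕ → ℕ) (K : ℕ) :
    μ {ω | ∀ k < K, (∑ j ∈ Finset.range (M k), ξ k j ω) = T k}
      = ∏ k ∈ Finset.range K, pE (α * M k) (T k) := by
  have := gen_meas hα hiid hξmeas hpois M T K ∅ (fun _ => 0) (by simp)
  simpa using this

end Measure

/-- Generation-size function of a trajectory: start `a`, then `l`, then `0` forever. -/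
def trajA (a : ℕ) (l : List ℕ) (k : ℕ) : ℕ := (a :: l).getD k 0

lemma trajA_zero (a : ℕ) (l : List ℕ) : trajA a l 0 = a := rfl

lemma trajA_succ (a j : ℕ) (l : List ℕ) (k : ℕ) : trajA a (j :: l) (k + 1) = trajA j l k := rfl

lemma trajA_of_le (a : ℕ) (l : List ℕ) {k : ℕ} (hk : l.length + 1 ≤ k) : trajA a l k = 0 := by
  unfold trajA
  exact List.getD_eq_default _ _ (by simpa using hk)

lemma trajA_sum : ∀ (l : List ℕ) (a : ℕ),
    ∑ k ∈ Finset.range (l.length + 1), trajA a l k = a + l.sum := by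
  intro l
  induction l with
  | nil => intro a; simp [trajA]
  | cons j t ih =>
    intro a
    rw [List.length_cons, Finset.sum_range_succ' (fun k => trajA a (j :: t) k)]
    simp only [trajA_succ, trajA_zero, ih j, List.sum_cons]
    omega

lemma trajA_inj : ∀ (l l' : List ℕ), (∀ x ∈ l, 0 < x) → (∀ x ∈ l', 0 < x) →
    (∀ k, trajA 1 l k = trajA 1 l' k) → l = l' := by
  have key : ∀ (l l' : List ℕ), (∀ x ∈ l, 0 < x) → (∀ x ∈ l', 0 < x) →
      (∀ k, l.getD k 0 = l'.getD k 0) → l = l' := by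
    intro l
    induction l with
    | nil =>
      intro l' _ hp' h
      rcases l' with _ | ⟨y, ys⟩
      · rfl
      · have := h 0
        simp only [List.getD_nil, List.getD_cons_zero] at this
        exact absurd (hp' y (List.mem_cons_self)) (by omega)
    | cons x xs ih =>
      intro l' hp hp' h
      rcases l' with _ | ⟨y, ys⟩
      · have := h 0
        simp only [List.getD_nil, List.getD_cons_zero] at this
        exact absurd (hp x (List.mem_cons_self)) (by omega)
      · have h0 := h 0
        simp only [List.getD_cons_zero] at h0
        subst h0
        rw [ih ys (fun z hz => hp z (List.mem_cons_of_mem _ hz))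
          (fun z hz => hp' z (List.mem_cons_of_mem _ hz))
          (fun k => by have := h (k+1); simpa using this)]
  intro l l' hp hp' h
  exact key l l' hp hp' (fun k => by have := h (k+1); simpa [trajA] using this)

lemma trajA_prod_Wt (α : ℝ) : ∀ (l : List ℕ) (a : ℕ),
    ∏ k ∈ Finset.range (l.length + 1), pE (α * trajA a l k) (trajA a l (k + 1)) = Wt α a l := by
  intro l
  induction l with
  | nil =>
    intro a
    simp only [List.length_nil, zero_add, Finset.prod_range_one, trajA_zero, Wt]
    rfl
  | cons j t ih =>
    intro a
    rw [List.length_cons, Finset.prod_range_succ' (fun k => pE (α * trajA a (j :: t) k) (trajA a (j :: t) (k + 1)))]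
    simp only [trajA_succ, trajA_zero, Wt]
    rw [ih j, mul_comm]

/-- The total progeny `R` of a Galton–Watson process with `Poisson α`
offspring (`α < 1`), started from one individual, follows the Borel distribution:
`P(R = n) = e^{-αn}·(αn)^{n-1}/n!` for `n ≥ 1`. -/
theorem stmt16 {Ω : Type*} [MeasurableSpace Ω] (μ : Measure Ω) [IsProbabilityMeasure μ]
    (α : ℝ) (hα0 : 0 < α) (hα1 : α < 1)
    (ξ : ℕ → ℕ → Ω → ℕ) (hξmeas : ∀ n j, Measurable (ξ n j))
    (hiid : iIndepFun (fun p : ℕ × ℕ => ξ p.1 p.2) μ)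
    (hpois : ∀ n j k, μ {ω | ξ n j ω = k} =
      ENNReal.ofReal (Real.exp (-α) * α ^ k / (Nat.factorial k)))
    (Z : ℕ → Ω → ℕ) (hZ0 : ∀ ω, Z 0 ω = 1)
    (hZrec : ∀ n ω, Z (n + 1) ω = ∑ j ∈ Finset.range (Z n ω), ξ n j ω) :
    ∀ n : ℕ, 1 ≤ n →
      μ {ω | (∑' k, (Z k ω : ℝ≥0∞)) = (n : ℝ≥0∞)} =
        ENNReal.ofReal (Real.exp (-(α * n)) * (α * n) ^ (n - 1) / (Nat.factorial n)) := by
  intro n hn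
  -- measurability of Z
  have hZmeas : ∀ k, Measurable (Z k) := by
    intro k
    induction k with
    | zero =>
      have : Z 0 = fun _ => 1 := funext hZ0
      rw [this]; exact measurable_const
    | succ k ih =>
      refine measurable_to_countable' fun c => ?_
      have : Z (k+1) ⁻¹' {c}
          = ⋃ m : ℕ, (Z k ⁻¹' {m}) ∩ {ω | (∑ j ∈ Finset.range m, ξ k j ω) = c} := by
        ext ω
        simp only [Set.mem_preimage, Set.mem_singleton_iff, Set.mem_iUnion, Set.mem_inter_iff,
          Set.mem_setOf_eq]
        constructor
        · intro h; exact ⟨Z k ω, rfl, by rw [← hZrec k ω]; exact h⟩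
        · rintro ⟨m, hm, hs⟩; rw [hZrec k ω, hm]; exact hs
      rw [this]
      exact MeasurableSet.iUnion fun m => (ih (measurableSet_singleton m)).inter
        ((Finset.measurable_sum _ fun j _ => hξmeas k j) (measurableSet_singleton c))
  -- persistence of extinction
  have hpers : ∀ ω m, Z m ω = 0 → ∀ k, m ≤ k → Z k ω = 0 := by
    intro ω m h0 k hk
    obtain ⟨d, rfl⟩ := Nat.exists_eq_add_of_le hk
    induction d with
    | zero => exact h0
    | succ d ih =>
      rw [show m + (d+1) = (m+d) + 1 by omega, hZrec, ih (by omega)]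
      simp
  -- tsum along a trajectory
  have htsum : ∀ (ω : Ω) (l : List ℕ), (∀ k, Z k ω = trajA 1 l k) →
      (∑' k, (Z k ω : ℝ≥0∞)) = ((1 + l.sum : ℕ) : ℝ≥0∞) := by
    intro ω l h
    have h1 : (∑' k, (Z k ω : ℝ≥0∞)) = ∑ k ∈ Finset.range (l.length + 1), ((Z k ω : ℝ≥0∞)) := by
      refine tsum_eq_sum fun k hk => ?_
      rw [h k, trajA_of_le 1 l (not_lt.mp (Finset.mem_range.not.mp hk))]
      simp
    rw [h1]
    have : ∀ k ∈ Finset.range (l.length + 1), ((Z k ω : ℝ≥0∞)) = ((trajA 1 l k : ℕ) : ℝ≥0∞) :=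
      fun k _ => by rw [h k]
    rw [Finset.sum_congr rfl this, ← Nat.cast_sum, trajA_sum l 1]
  -- characterization of trajectory events via ξ
  have hchar : ∀ l : List ℕ, {ω | ∀ k, Z k ω = trajA 1 l k}
      = {ω | ∀ k < l.length + 1, (∑ j ∈ Finset.range (trajA 1 l k), ξ k j ω) = trajA 1 l (k+1)} := by
    intro l
    ext ω
    simp only [Set.mem_setOf_eq]
    constructor
    · intro h k _
      rw [← h k, ← hZrec k ω, h (k+1)]
    · intro h k
      induction k with
      | zero => rw [hZ0, trajA_zero]
      | succ k ih =>
        rcases Nat.lt_or_ge k (l.length + 1) with hk | hk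
        · rw [hZrec k ω, ih, h k hk]
        · rw [hZrec k ω, ih, trajA_of_le 1 l hk]
          rw [trajA_of_le 1 l (by omega)]
          simp
  have hEmeas : ∀ l : List ℕ, MeasurableSet {ω | ∀ k, Z k ω = trajA 1 l k} := by
    intro l
    have : {ω | ∀ k, Z k ω = trajA 1 l k} = ⋂ k, Z k ⁻¹' {trajA 1 l k} := by
      ext ω; simp [Set.mem_iInter]
    rw [this]
    exact MeasurableSet.iInter fun k => hZmeas k (measurableSet_singleton _)
  have hEval : ∀ l : List ℕ, μ {ω | ∀ k, Z k ω = trajA 1 l k} = Wt α 1 l := by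
    intro l
    rw [hchar l,
      pois_sum_meas hα0 hiid hξmeas hpois (trajA 1 l) (fun k => trajA 1 l (k+1)) (l.length + 1),
      trajA_prod_Wt α l 1]
  -- the partition of the event
  have hpart : {ω | (∑' k, (Z k ω : ℝ≥0∞)) = (n : ℝ≥0∞)}
      = ⋃ l : List ℕ, {ω | ((∀ x ∈ l, 0 < x) ∧ l.sum = n - 1) ∧ ∀ k, Z k ω = trajA 1 l k} := by
    ext ω
    simp only [Set.mem_setOf_eq, Set.mem_iUnion]
    constructor
    · intro h
      have hex : ∃ m, Z m ω = 0 := by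
        by_contra hc
        push_neg at hc
        have h1 : ∀ k, 1 ≤ Z k ω := fun k => Nat.one_le_iff_ne_zero.mpr (hc k)
        have h2 : (((n+1 : ℕ)) : ℝ≥0∞) ≤ ∑' k, (Z k ω : ℝ≥0∞) := by
          calc (((n+1:ℕ)) : ℝ≥0∞) = ∑ _k ∈ Finset.range (n+1), (1 : ℝ≥0∞) := by simp
            _ ≤ ∑ k ∈ Finset.range (n+1), ((Z k ω : ℝ≥0∞)) :=
                Finset.sum_le_sum fun k _ => by exact_mod_cast h1 k
            _ ≤ ∑' k, (Z k ω : ℝ≥0∞) := ENNReal.sum_le_tsum _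
        rw [h] at h2
        have : n + 1 ≤ n := by exact_mod_cast h2
        omega
      set m := Nat.find hex with hm_def
      have hm : Z m ω = 0 := Nat.find_spec hex
      have hmin : ∀ i, i < m → Z i ω ≠ 0 := fun i hi => Nat.find_min hex hi
      have hm1 : 1 ≤ m := by
        rcases Nat.eq_zero_or_pos m with h0 | h0
        · exfalso; rw [h0] at hm; rw [hZ0 ω] at hm; omega
        · exact h0
      set l : List ℕ := List.ofFn (fun i : Fin (m-1) => Z (i+1) ω) with hl_def
      have hlen : l.length = m - 1 := by simp [hl_def]
      have htraj : ∀ k, Z k ω = trajA 1 l k := by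
        intro k
        rcases k with _ | k
        · rw [hZ0, trajA_zero]
        · rcases Nat.lt_or_ge (k+1) m with hk | hk
          · have hk' : k < l.length := by omega
            unfold trajA
            rw [List.getD_cons_succ, List.getD_eq_getElem l 0 hk']
            simp only [hl_def]
            rw [List.getElem_ofFn]
          · rw [hpers ω m hm (k+1) hk, trajA_of_le 1 l (by omega)]
      have hpos : ∀ x ∈ l, 0 < x := by
        intro x hx
        simp only [hl_def, List.mem_ofFn] at hx
        obtain ⟨i, rfl⟩ := hx
        have hi := i.isLt
        have : (i : ℕ) + 1 < m := by omega
        exact Nat.pos_of_ne_zero (hmin _ this)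
      have hsum : l.sum = n - 1 := by
        have := htsum ω l htraj
        rw [h] at this
        have : 1 + l.sum = n := by exact_mod_cast this.symm
        omega
      exact ⟨l, ⟨hpos, hsum⟩, htraj⟩
    · rintro ⟨l, ⟨hpos, hsum⟩, htraj⟩
      rw [htsum ω l htraj]
      congr 1
      omega
  rw [hpart, measure_iUnion ?hdisj ?hmeas]
  case hdisj =>
    intro l l' hne
    refine Set.disjoint_left.mpr ?_
    rintro ω ⟨⟨hp, _⟩, ht⟩ ⟨⟨hp', _⟩, ht'⟩
    exact hne (trajA_inj l l' hp hp' fun k => by rw [← ht k, ← ht' k])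
  case hmeas =>
    intro l
    rcases Classical.em ((∀ x ∈ l, 0 < x) ∧ l.sum = n - 1) with hc | hc
    · have : {ω | ((∀ x ∈ l, 0 < x) ∧ l.sum = n - 1) ∧ ∀ k, Z k ω = trajA 1 l k}
          = {ω | ∀ k, Z k ω = trajA 1 l k} := by
        ext ω; simp only [Set.mem_setOf_eq]; tauto
      rw [this]; exact hEmeas l
    · have : {ω | ((∀ x ∈ l, 0 < x) ∧ l.sum = n - 1) ∧ ∀ k, Z k ω = trajA 1 l k} = ∅ := by
        ext ω; simp only [Set.mem_setOf_eq, Set.mem_empty_iff_false]; tauto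
      rw [this]; exact MeasurableSet.empty
  have hterm : ∀ l : List ℕ,
      μ {ω | ((∀ x ∈ l, 0 < x) ∧ l.sum = n - 1) ∧ ∀ k, Z k ω = trajA 1 l k}
        = if (∀ x ∈ l, 0 < x) ∧ l.sum = n - 1 then Wt α 1 l else 0 := by
    intro l
    rcases Classical.em ((∀ x ∈ l, 0 < x) ∧ l.sum = n - 1) with hc | hc
    · rw [if_pos hc]
      have : {ω | ((∀ x ∈ l, 0 < x) ∧ l.sum = n - 1) ∧ ∀ k, Z k ω = trajA 1 l k}
          = {ω | ∀ k, Z k ω = trajA 1 l k} := by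
        ext ω; simp only [Set.mem_setOf_eq]; tauto
      rw [this]; exact hEval l
    · rw [if_neg hc]
      have : {ω | ((∀ x ∈ l, 0 < x) ∧ l.sum = n - 1) ∧ ∀ k, Z k ω = trajA 1 l k} = ∅ := by
        ext ω; simp only [Set.mem_setOf_eq, Set.mem_empty_iff_false]; tauto
      rw [this]; exact measure_empty
  rw [tsum_congr hterm]
  have hG : (∑' l : List ℕ, if (∀ x ∈ l, 0 < x) ∧ l.sum = n - 1 then Wt α 1 l else 0)
      = Gfun α 1 (n - 1) := rfl
  rw [hG, Gfun_closed hα0 (n-1) 1 le_rfl]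
  congr 1
  unfold borelR
  have h1 : (1:ℕ) + (n-1) = n := by omega
  rw [h1]
  rw [show ((1:ℕ):ℝ) + ((n - 1 : ℕ):ℝ) = n by rw [Nat.cast_sub hn]; push_cast; ring]
  have hn0 : ((n:ℝ)) ≠ 0 := by positivity
  have hfac : ((n:ℝ)) * (Nat.factorial (n-1)) = (Nat.factorial n : ℝ) := by
    exact_mod_cast congrArg (Nat.cast (R := ℝ)) (Nat.mul_factorial_pred (by omega))
  rw [mul_pow]
  push_cast
  field_simp
  rw [← hfac]
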